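/- The triple integral 2 ∫₀¹ t² ( ∫_t¹ ρ/√(ρ² − t²) ( ∫_ρ¹ r/√(r² − t²) dr ) dρ ) dt equals 2/15. -/

import Mathlib

open MeasureTheory Real Set intervalIntegral

lemma sqrt_deriv (t x : ℝ) (hx : x ^ 2 - t ^ 2 ≠ 0) :
    HasDerivAt (fun r : ℝ => Real.sqrt (r ^ 2 - t ^ 2))
      (x / Real.sqrt (x ^ 2 - t ^ 2)) x := by
  have h1 : HasDerivAt (fun r : ℝ => r ^ 2 - t ^ 2) (2 * x) x := by
    simpa using ((hasDerivAt_pow 2 x).sub_const (t ^ 2))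
  have h2 := (Real.hasDerivAt_sqrt hx).comp x h1
  refine h2.congr_deriv ?_
  field_simp

lemma inner_eq (t ρ : ℝ) (ht : 0 ≤ t) (htρ : t < ρ) (hρ : ρ ≤ 1) :
    (∫ r in ρ..(1:ℝ), r / Real.sqrt (r ^ 2 - t ^ 2))
      = Real.sqrt (1 - t ^ 2) - Real.sqrt (ρ ^ 2 - t ^ 2) := by
  have key : ∀ x ∈ Set.uIcc ρ (1:ℝ), 0 < x ^ 2 - t ^ 2 := by
    intro x hx
    rw [Set.uIcc_of_le hρ] at hx
    have hx1 : t < x := lt_of_lt_of_le htρ hx.1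
    nlinarith
  rw [show Real.sqrt (1 - t ^ 2) = Real.sqrt ((1:ℝ) ^ 2 - t ^ 2) by norm_num]
  apply intervalIntegral.integral_eq_sub_of_hasDerivAt
    (f := fun r => Real.sqrt (r ^ 2 - t ^ 2))
  · intro x hx
    exact sqrt_deriv t x (ne_of_gt (key x hx))
  · apply ContinuousOn.intervalIntegrable
    apply ContinuousOn.div continuousOn_id
    · exact (Real.continuous_sqrt.comp (by continuity)).continuousOn
    · intro x hx
      exact Real.sqrt_ne_zero'.mpr (key x hx)

lemma mid_eq (t : ℝ) (ht : 0 ≤ t) (ht1 : t ≤ 1) :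
    (∫ ρ in t..(1:ℝ), (ρ / Real.sqrt (ρ ^ 2 - t ^ 2)) *
        ∫ r in ρ..(1:ℝ), r / Real.sqrt (r ^ 2 - t ^ 2)) = (1 - t ^ 2) / 2 := by
  set g : ℝ → ℝ := fun ρ => (ρ / Real.sqrt (ρ ^ 2 - t ^ 2)) *
      (Real.sqrt (1 - t ^ 2) - Real.sqrt (ρ ^ 2 - t ^ 2)) with hg
  have hcongr : (∫ ρ in t..(1:ℝ), (ρ / Real.sqrt (ρ ^ 2 - t ^ 2)) *
        ∫ r in ρ..(1:ℝ), r / Real.sqrt (r ^ 2 - t ^ 2)) = ∫ ρ in t..(1:ℝ), g ρ := by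
    apply intervalIntegral.integral_congr_ae
    filter_upwards with x hx
    rw [Set.uIoc_of_le ht1] at hx
    rw [inner_eq t x ht hx.1 hx.2]
  rw [hcongr]
  set G : ℝ → ℝ := fun ρ => Real.sqrt (1 - t ^ 2) * Real.sqrt (ρ ^ 2 - t ^ 2) - ρ ^ 2 / 2
    with hG
  have hcont : ContinuousOn G (Set.Icc t 1) := by
    apply Continuous.continuousOn
    continuity
  have hderiv : ∀ x ∈ Set.Ioo t (1:ℝ), HasDerivAt G (g x) x := by
    intro x hx
    have hxt : t < x := hx.1
    have hpos : 0 < x ^ 2 - t ^ 2 := by nlinarith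
    have hs : Real.sqrt (x ^ 2 - t ^ 2) ≠ 0 := ne_of_gt (Real.sqrt_pos.mpr hpos)
    have h1 := ((sqrt_deriv t x (ne_of_gt hpos)).const_mul (Real.sqrt (1 - t ^ 2))).sub
      ((hasDerivAt_pow 2 x).div_const 2)
    refine h1.congr_deriv ?_
    have hsq : Real.sqrt (x ^ 2 - t ^ 2) * Real.sqrt (x ^ 2 - t ^ 2) = x ^ 2 - t ^ 2 :=
      Real.mul_self_sqrt hpos.le
    simp only [hg]
    field_simp [hg]
    ring
  have hpos : ∀ x ∈ Set.Ioo t (1:ℝ), 0 ≤ g x := by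
    intro x hx
    have hxt : t < x := hx.1
    apply mul_nonneg
    · exact div_nonneg (le_of_lt (lt_of_le_of_lt ht hxt)) (Real.sqrt_nonneg _)
    · have : x ^ 2 - t ^ 2 ≤ 1 - t ^ 2 := by nlinarith [hx.2]
      simpa using Real.sqrt_le_sqrt this
  have hint : IntervalIntegrable g volume t 1 := by
    apply intervalIntegrable_deriv_of_nonneg (g := G)
    · rwa [Set.uIcc_of_le ht1]
    · simpa [min_eq_left ht1, max_eq_right ht1] using hderiv
    · simpa [min_eq_left ht1, max_eq_right ht1] using hpos
  rw [intervalIntegral.integral_eq_sub_of_hasDeriv_right_of_le ht1 hcont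
    (fun x hx => (hderiv x hx).hasDerivWithinAt) hint]
  have h1 : Real.sqrt (1 - t ^ 2) * Real.sqrt (1 - t ^ 2) = 1 - t ^ 2 :=
    Real.mul_self_sqrt (by nlinarith)
  simp only [hG]
  rw [show (t:ℝ) ^ 2 - t ^ 2 = 0 by ring, Real.sqrt_zero,
    show (1:ℝ) ^ 2 - t ^ 2 = 1 - t ^ 2 by ring]
  nlinarith [h1]

theorem triple_integral_eq :
    2 * ∫ t in (0:ℝ)..1, t ^ 2 *
        ∫ ρ in t..(1:ℝ), (ρ / Real.sqrt (ρ ^ 2 - t ^ 2)) *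
          ∫ r in ρ..(1:ℝ), r / Real.sqrt (r ^ 2 - t ^ 2) = 2 / 15 := by
  have hcongr : (∫ t in (0:ℝ)..1, t ^ 2 *
        ∫ ρ in t..(1:ℝ), (ρ / Real.sqrt (ρ ^ 2 - t ^ 2)) *
          ∫ r in ρ..(1:ℝ), r / Real.sqrt (r ^ 2 - t ^ 2))
      = ∫ t in (0:ℝ)..1, (t ^ 2 / 2 - t ^ 4 / 2) := by
    apply intervalIntegral.integral_congr
    intro x hx
    rw [Set.uIcc_of_le (by norm_num : (0:ℝ) ≤ 1)] at hx
    simp only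
    rw [mid_eq x hx.1 hx.2]
    ring
  rw [hcongr]
  have h2 : IntervalIntegrable (fun t : ℝ => t ^ 2 / 2) volume 0 1 := by
    apply Continuous.intervalIntegrable; continuity
  have h4 : IntervalIntegrable (fun t : ℝ => t ^ 4 / 2) volume 0 1 := by
    apply Continuous.intervalIntegrable; continuity
  rw [intervalIntegral.integral_sub h2 h4]
  simp only [intervalIntegral.integral_div, integral_pow]
  norm_num
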